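/- arXiv:0812.4784 — 2 statements merged into one kernel-verified Lean document; each statement's English description precedes it below -/
import Mathlib

section
/- For every natural number n, the total number of abelian squares of size n over a 3-letter alphabet equals ∑_{k=0}^{n} C(n,k)^2 · C(2k,k). Formally: the number of pairs of words w, w' : Fin n → Fin 3 such that every letter c ∈ Fin 3 occurs equally often in w and in w' equals ∑_{k=0}^{n} C(n,k)^2 · C(2k,k). -/
open Finset

lemma count_words (n a b : ℕ) :
    ((univ : Finset (Fin n → Fin 3)).filter (fun w =>
      (univ.filter (fun i => w i = 0)).card = a ∧ (univ.filter (fun i => w i = 1)).card = b)).card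
    = n.choose (a+b) * (a+b).choose a := by
  have key : ((univ : Finset (Fin n → Fin 3)).filter (fun w =>
      (univ.filter (fun i => w i = 0)).card = a ∧ (univ.filter (fun i => w i = 1)).card = b)).card
      = (((univ : Finset (Fin n)).powersetCard (a+b)).sigma (fun S => S.powersetCard a)).card := by
    apply Finset.card_bij (fun w _ => ⟨univ.filter (fun i => w i ≠ 2), univ.filter (fun i => w i = 0)⟩)
    · rintro w hw
      simp only [mem_filter, mem_univ, true_and] at hw
      obtain ⟨h0, h1⟩ := hw
      have hsplit : (univ.filter (fun i => w i ≠ 2)) =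
          (univ.filter (fun i => w i = 0)) ∪ (univ.filter (fun i => w i = 1)) := by
        ext i; simp only [mem_filter, mem_union, mem_univ, true_and]
        omega
      have hdisj : Disjoint (univ.filter (fun i : Fin n => w i = 0))
          (univ.filter (fun i => w i = 1)) := by
        rw [Finset.disjoint_filter]
        intro i _ h0 h1; omega
      simp only [mem_sigma, mem_powersetCard]
      refine ⟨⟨subset_univ _, ?_⟩, ?_, h0⟩
      · rw [hsplit, card_union_of_disjoint hdisj, h0, h1]
      · intro i hi
        simp only [mem_filter, mem_univ, true_and] at hi ⊢
        omega
    · intro w hw w' hw' h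
      simp only [Sigma.mk.inj_iff, heq_eq_eq] at h
      obtain ⟨hS, hA⟩ := h
      funext i
      have e0 : (i ∈ univ.filter (fun i => w i ≠ 2)) = (i ∈ univ.filter (fun i => w' i ≠ 2)) := by rw [hS]
      have e1 : (i ∈ univ.filter (fun i => w i = 0)) = (i ∈ univ.filter (fun i => w' i = 0)) := by rw [hA]
      simp only [mem_filter, mem_univ, true_and, eq_iff_iff] at e0 e1
      omega
    · rintro ⟨S, A⟩ hSA
      simp only [mem_sigma, mem_powersetCard] at hSA
      obtain ⟨⟨-, hScard⟩, hAS, hAcard⟩ := hSA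
      refine ⟨fun i => if i ∈ A then 0 else if i ∈ S then 1 else 2, ?_, ?_⟩
      · have f0 : (univ.filter (fun i : Fin n => (if i ∈ A then (0:Fin 3) else if i ∈ S then 1 else 2) = 0)) = A := by
          ext i; simp only [mem_filter, mem_univ, true_and]
          split_ifs with h1 h2
          · simp [h1]
          · simp [h1, h2]
          · simp [h1, h2]
        have f1 : (univ.filter (fun i : Fin n => (if i ∈ A then (0:Fin 3) else if i ∈ S then 1 else 2) = 1)) = S \ A := by
          ext i; simp only [mem_filter, mem_univ, true_and, mem_sdiff]
          split_ifs with h1 h2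
          · simp [h1]
          · simp [h1, h2]
          · simp [h1, h2]
        simp only [mem_filter, mem_univ, true_and]
        refine ⟨by rw [f0, hAcard], ?_⟩
        rw [f1, card_sdiff_of_subset hAS, hScard, hAcard]
        omega
      · have f0 : (univ.filter (fun i : Fin n => (if i ∈ A then (0:Fin 3) else if i ∈ S then 1 else 2) = 0)) = A := by
          ext i; simp only [mem_filter, mem_univ, true_and]
          split_ifs with h1 h2
          · simp [h1]
          · simp [h1, h2]
          · simp [h1, h2]
        have f2 : (univ.filter (fun i : Fin n => (if i ∈ A then (0:Fin 3) else if i ∈ S then 1 else 2) ≠ 2)) = S := by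
          ext i; simp only [mem_filter, mem_univ, true_and]
          split_ifs with h1 h2
          · simp [hAS h1]
          · simp [h2]
          · simp [h2]
        simp only [Sigma.mk.inj_iff, heq_eq_eq]
        exact ⟨f2, f0⟩
  rw [key, card_sigma]
  rw [Finset.sum_congr rfl (fun S hS => by
    rw [card_powersetCard, (mem_powersetCard.mp hS).2])]
  simp [card_powersetCard, mul_comm]

lemma counts_sum (n : ℕ) (w : Fin n → Fin 3) :
    (univ.filter (fun i => w i = 0)).card + (univ.filter (fun i => w i = 1)).card
      + (univ.filter (fun i => w i = 2)).card = n := by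
  have h := Finset.card_eq_sum_card_fiberwise (f := w) (s := univ) (t := univ) (fun x _ => mem_univ _)
  simp only [card_univ, Fintype.card_fin, Fin.sum_univ_three] at h
  omega

lemma cond_iff (n : ℕ) (w w' : Fin n → Fin 3) :
    (∀ c : Fin 3, (univ.filter (fun i => w i = c)).card = (univ.filter (fun i => w' i = c)).card)
    ↔ ((univ.filter (fun i => w i = 0)).card = (univ.filter (fun i => w' i = 0)).card ∧
       (univ.filter (fun i => w i = 1)).card = (univ.filter (fun i => w' i = 1)).card) := by
  constructor
  · exact fun h => ⟨h 0, h 1⟩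
  · rintro ⟨h0, h1⟩ c
    have hs := counts_sum n w
    have hs' := counts_sum n w'
    have : (univ.filter (fun i => w i = 2)).card = (univ.filter (fun i => w' i = 2)).card := by omega
    have : c = 0 ∨ c = 1 ∨ c = 2 := by omega
    rcases this with rfl | rfl | rfl <;> assumption

lemma sum_identity (n : ℕ) :
    ∑ a ∈ range (n+1), ∑ b ∈ range (n+1), (n.choose (a+b) * (a+b).choose a)^2
      = ∑ k ∈ range (n + 1), (n.choose k) ^ 2 * (2 * k).choose k := by
  have rhs : ∀ k, (2*k).choose k = ∑ a ∈ range (k+1), ((k.choose a))^2 := by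
    intro k
    rw [two_mul, Nat.add_choose_eq, Finset.Nat.sum_antidiagonal_eq_sum_range_succ_mk]
    exact Finset.sum_congr rfl (fun a ha => by
      simp only
      rw [Nat.choose_symm (Nat.lt_succ_iff.mp (mem_range.mp ha))]
      ring)
  have h1 : ∑ k ∈ range (n + 1), (n.choose k) ^ 2 * (2 * k).choose k
      = ∑ q ∈ (range (n+1)).sigma (fun k => range (k+1)),
          (n.choose q.1 * q.1.choose q.2)^2 := by
    rw [Finset.sum_sigma]
    exact Finset.sum_congr rfl (fun k _ => by
      rw [rhs k, Finset.mul_sum]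
      exact Finset.sum_congr rfl (fun a _ => by ring))
  rw [h1, ← Finset.sum_product']
  rw [← Finset.sum_filter_of_ne (p := fun p : ℕ × ℕ => p.1 + p.2 ≤ n)
    (f := fun p : ℕ × ℕ => (n.choose (p.1+p.2) * (p.1+p.2).choose p.1)^2)
    (by
      intro p _ hne
      by_contra hgt
      push_neg at hgt
      exact hne (by simp [Nat.choose_eq_zero_of_lt hgt]))]
  apply Finset.sum_nbij' (i := fun p : ℕ × ℕ => (⟨p.1 + p.2, p.1⟩ : Σ _ : ℕ, ℕ))
    (j := fun q : Σ _ : ℕ, ℕ => (q.2, q.1 - q.2))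
  · rintro ⟨a, b⟩ hp
    simp only [mem_filter, mem_product, mem_range, mem_sigma] at hp ⊢
    omega
  · rintro ⟨k, a⟩ hq
    simp only [mem_filter, mem_product, mem_range, mem_sigma] at hq ⊢
    omega
  · rintro ⟨a, b⟩ hp
    simp only [mem_filter, mem_product, mem_range] at hp
    simp
  · rintro ⟨k, a⟩ hq
    simp only [mem_sigma, mem_range] at hq
    simp only [Sigma.mk.inj_iff, heq_eq_eq]
    exact ⟨by omega, trivial⟩
  · rintro ⟨a, b⟩ _
    rfl

theorem abelian_squares_total_count (n : ℕ) :
    ((Finset.univ : Finset ((Fin n → Fin 3) × (Fin n → Fin 3))).filter (fun p =>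
        ∀ c : Fin 3,
          (Finset.univ.filter (fun i => p.1 i = c)).card
            = (Finset.univ.filter (fun i => p.2 i = c)).card)).card
      = ∑ k ∈ range (n + 1), (n.choose k) ^ 2 * (2 * k).choose k := by
  rw [← sum_identity n]
  rw [Finset.card_eq_sum_card_fiberwise
    (f := fun p : (Fin n → Fin 3) × (Fin n → Fin 3) =>
      ((univ.filter (fun i => p.1 i = 0)).card, (univ.filter (fun i => p.1 i = 1)).card))
    (t := range (n+1) ×ˢ range (n+1))
    (by
      intro p _
      simp only [Finset.mem_coe, mem_product, mem_range, Nat.lt_succ_iff]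
      exact ⟨le_trans (card_filter_le _ _) (by simp),
             le_trans (card_filter_le _ _) (by simp)⟩)]
  rw [Finset.sum_product]
  refine Finset.sum_congr rfl (fun a _ => Finset.sum_congr rfl (fun b _ => ?_))
  rw [Finset.filter_filter]
  have hset : ((univ : Finset ((Fin n → Fin 3) × (Fin n → Fin 3))).filter (fun p =>
      (∀ c : Fin 3, (univ.filter (fun i => p.1 i = c)).card
          = (univ.filter (fun i => p.2 i = c)).card) ∧
      ((univ.filter (fun i => p.1 i = 0)).card, (univ.filter (fun i => p.1 i = 1)).card) = (a, b)))
      = (univ.filter (fun w : Fin n → Fin 3 =>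
          (univ.filter (fun i => w i = 0)).card = a ∧ (univ.filter (fun i => w i = 1)).card = b)) ×ˢ
        (univ.filter (fun w : Fin n → Fin 3 =>
          (univ.filter (fun i => w i = 0)).card = a ∧ (univ.filter (fun i => w i = 1)).card = b)) := by
    rw [← Finset.univ_product_univ, ← Finset.filter_product]
    apply Finset.filter_congr
    intro p _
    simp only [Prod.mk.injEq]
    rw [cond_iff]
    constructor
    · rintro ⟨⟨h0, h1⟩, ha, hb⟩
      exact ⟨⟨ha, hb⟩, ⟨h0 ▸ ha, h1 ▸ hb⟩⟩
    · rintro ⟨⟨ha, hb⟩, ⟨ha', hb'⟩⟩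
      exact ⟨⟨ha.trans ha'.symm, hb.trans hb'.symm⟩, ha, hb⟩
  rw [hset, Finset.card_product, count_words]
  ring
end

section
/- For all natural numbers n and k with k ≤ n, the following weighted count of abelian squares holds: ∑ over all abelian squares (w, w') of size n over a 3-letter alphabet such that the top row w has exactly k entries different from the letter 1, of the binomial coefficient C(n + j(w,w'), j(w,w')), equals C(n,k)^2 · C(n+k,k)^2, where j(w,w') denotes n minus the number of positions i at which both w(i) and w'(i) equal the letter 1. Formally: ∑_{(w,w')} C(n + j(w,w'), j(w,w')) = C(n,k)^2 · C(n+k,k)^2, the sum being over pairs w, w' : Fin n → Fin 3 such that every letter c ∈ Fin 3 occurs equally often in w and in w', and #{i : w(i) ≠ 0} = k, with j(w,w') = n − #{i : w(i) = 0 and w'(i) = 0}. -/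
open Finset

set_option linter.unusedSectionVars false


lemma lemG (a k j : ℕ) :
    ∑ t ∈ range (a+1), a.choose t * (k.choose t * t.choose j)
      = k.choose j * (a + k - j).choose k := by
  by_cases hjk : j ≤ k
  · by_cases hja : j ≤ a
    · -- main case
      have h1 : ∑ t ∈ range (a+1), a.choose t * (k.choose t * t.choose j)
          = ∑ t ∈ Ico j (a+1), a.choose t * (k.choose t * t.choose j) := by
        rw [range_eq_Ico]
        refine (sum_subset (Ico_subset_Ico (Nat.zero_le _) le_rfl) ?_).symm
        intro t ht hnt
        simp only [mem_Ico] at ht hnt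
        have : t < j := by omega
        simp [Nat.choose_eq_zero_of_lt this]
      rw [h1, sum_Ico_eq_sum_range]
      have hterm : ∀ u : ℕ, k.choose (j+u) * (j+u).choose j = k.choose j * (k-j).choose u := by
        intro u
        by_cases h : j + u ≤ k
        · have := Nat.choose_mul (n := k) (Nat.le_add_right j u)
          simpa [Nat.add_sub_cancel_left] using this
        · rw [Nat.choose_eq_zero_of_lt (show k < j + u by omega),
            Nat.choose_eq_zero_of_lt (show k - j < u by omega)]
          simp
      have h2 : ∑ u ∈ range (a+1-j), a.choose (j+u) * (k.choose (j+u) * (j+u).choose j)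
          = k.choose j * ∑ u ∈ range (a+1-j), a.choose (j+u) * (k-j).choose u := by
        rw [mul_sum]
        refine sum_congr rfl fun u _ => ?_
        calc a.choose (j+u) * (k.choose (j+u) * (j+u).choose j)
            = k.choose (j+u) * (j+u).choose j * a.choose (j+u) := by ring
          _ = k.choose j * (k-j).choose u * a.choose (j+u) := by rw [hterm]
          _ = k.choose j * (a.choose (j+u) * (k-j).choose u) := by ring
      rw [h2]
      congr 1
      -- ∑ u ∈ range (a+1-j), C(a, j+u) * C(k-j, u) = (a+k-j).choose k
      have hak : a + k - j = a + (k - j) := by omega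
      rw [hak, Nat.add_choose_eq, Finset.Nat.sum_antidiagonal_eq_sum_range_succ_mk]
      -- RHS : ∑ x ∈ range (k+1), a.choose x * (k-j).choose (k-x)
      have hR : ∑ x ∈ range (k+1), a.choose x * (k-j).choose (k-x)
          = ∑ x ∈ Ico j (k+1), a.choose x * (k-j).choose (k-x) := by
        rw [range_eq_Ico]
        refine (sum_subset (Ico_subset_Ico (Nat.zero_le _) le_rfl) ?_).symm
        intro x hx hnx
        simp only [mem_Ico] at hx hnx
        have : k - j < k - x := by omega
        simp [Nat.choose_eq_zero_of_lt this]
      rw [Nat.succ_eq_add_one, hR, sum_Ico_eq_sum_range]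
      -- now both sides over ranges with index u, terms C(a,j+u) * C(k-j, ...)
      have hsymm : ∀ u, u ≤ k - j → (k-j).choose (k-(j+u)) = (k-j).choose u := by
        intro u hu
        have : k - (j+u) = (k-j) - u := by omega
        rw [this, Nat.choose_symm hu]
      -- extend both sums to range (a+k+1)
      have hL : ∑ u ∈ range (a+1-j), a.choose (j+u) * (k-j).choose u
          = ∑ u ∈ range (a+k+1), a.choose (j+u) * (k-j).choose u := by
        refine sum_subset (by apply range_subset_range.2; omega) ?_
        intro u hu hnu
        simp only [mem_range] at hu hnu
        have : a < j + u := by omega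
        simp [Nat.choose_eq_zero_of_lt this]
      have hRR : ∑ u ∈ range (k+1-j), a.choose (j+u) * (k-j).choose (k-(j+u))
          = ∑ u ∈ range (a+k+1), a.choose (j+u) * (k-j).choose u := by
        rw [← hL]
        have e1 : ∑ u ∈ range (k+1-j), a.choose (j+u) * (k-j).choose (k-(j+u))
            = ∑ u ∈ range (k+1-j), a.choose (j+u) * (k-j).choose u := by
          refine sum_congr rfl fun u hu => ?_
          simp only [mem_range] at hu
          rw [hsymm u (by omega)]
        rw [e1, hL]
        refine sum_subset (by apply range_subset_range.2; omega) ?_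
        intro u hu hnu
        simp only [mem_range] at hu hnu
        have : k - j < u := by omega
        simp [Nat.choose_eq_zero_of_lt this]
      rw [hL, ← hRR]
    · -- j > a : both sides 0
      have hz : ∀ t ∈ range (a+1), a.choose t * (k.choose t * t.choose j) = 0 := by
        intro t ht
        simp only [mem_range] at ht
        have : t < j := by omega
        simp [Nat.choose_eq_zero_of_lt this]
      rw [sum_congr rfl hz, sum_const_zero]
      have : a + k - j < k := by omega
      rw [Nat.choose_eq_zero_of_lt this, mul_zero]
  · -- j > k : both sides 0
    have hz : ∀ t ∈ range (a+1), a.choose t * (k.choose t * t.choose j) = 0 := by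
      intro t _
      by_cases h : t ≤ k
      · have : t < j := by omega
        simp [Nat.choose_eq_zero_of_lt this]
      · simp [Nat.choose_eq_zero_of_lt (by omega : k < t)]
    rw [sum_congr rfl hz, sum_const_zero, Nat.choose_eq_zero_of_lt (by omega : k < j), zero_mul]


lemma lemI (a k : ℕ) :
    ∑ t ∈ range (a+1), a.choose t * k.choose t * (a+2*k+t).choose (a+k)
      = (a+2*k).choose k * (a+2*k).choose a := by
  have hv : ∀ t : ℕ, (a+2*k+t).choose (a+k)
      = ∑ i ∈ range (a+k+1), (a+2*k).choose i * t.choose (a+k-i) := by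
    intro t
    rw [Nat.add_choose_eq, Finset.Nat.sum_antidiagonal_eq_sum_range_succ_mk]
  calc ∑ t ∈ range (a+1), a.choose t * k.choose t * (a+2*k+t).choose (a+k)
      = ∑ t ∈ range (a+1), ∑ i ∈ range (a+k+1),
          (a+2*k).choose i * (a.choose t * (k.choose t * t.choose (a+k-i))) := by
        refine sum_congr rfl fun t _ => ?_
        rw [hv, mul_sum]
        exact sum_congr rfl fun i _ => by ring
    _ = ∑ i ∈ range (a+k+1), (a+2*k).choose i *
          ∑ t ∈ range (a+1), a.choose t * (k.choose t * t.choose (a+k-i)) := by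
        rw [sum_comm]
        exact sum_congr rfl fun i _ => by rw [mul_sum]
    _ = ∑ i ∈ range (a+k+1), (a+2*k).choose i * (k.choose (a+k-i) * i.choose k) := by
        refine sum_congr rfl fun i hi => ?_
        simp only [mem_range] at hi
        rw [lemG]
        have e : a+k-(a+k-i) = i := by omega
        rw [e]
    _ = ∑ i ∈ Ico k (a+k+1), (a+2*k).choose i * (k.choose (a+k-i) * i.choose k) := by
        rw [range_eq_Ico]
        refine (sum_subset (Ico_subset_Ico (Nat.zero_le _) le_rfl) ?_).symm
        intro i hi hni
        simp only [mem_Ico] at hi hni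
        simp [Nat.choose_eq_zero_of_lt (show i < k by omega)]
    _ = ∑ u ∈ range (a+1), (a+2*k).choose (k+u) * (k.choose (a+k-(k+u)) * (k+u).choose k) := by
        rw [sum_Ico_eq_sum_range]
        have e : a+k+1-k = a+1 := by omega
        rw [e]
    _ = ∑ u ∈ range (a+1), (a+2*k).choose k * ((a+k).choose u * k.choose (a-u)) := by
        refine sum_congr rfl fun u hu => ?_
        simp only [mem_range] at hu
        have htri : (a+2*k).choose (k+u) * (k+u).choose k
            = (a+2*k).choose k * (a+k).choose u := by
          have := Nat.choose_mul (n := a+2*k) (Nat.le_add_right k u)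
          have e1 : a+2*k - k = a+k := by omega
          have e2 : k+u-k = u := by omega
          rw [e1, e2] at this
          exact this
        have e3 : a+k-(k+u) = a-u := by omega
        rw [e3]
        calc (a+2*k).choose (k+u) * (k.choose (a-u) * (k+u).choose k)
            = (a+2*k).choose (k+u) * (k+u).choose k * k.choose (a-u) := by ring
          _ = (a+2*k).choose k * (a+k).choose u * k.choose (a-u) := by rw [htri]
          _ = (a+2*k).choose k * ((a+k).choose u * k.choose (a-u)) := by ring
    _ = (a+2*k).choose k * (a+2*k).choose a := by
        rw [← mul_sum]
        congr 1
        have := Nat.add_choose_eq (a+k) k a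
        rw [Finset.Nat.sum_antidiagonal_eq_sum_range_succ_mk] at this
        rw [← this]
        congr 1
        omega

lemma lemII (a k : ℕ) :
    (2*k).choose k * ((k+a).choose a *
      ∑ m ∈ range (a+1), a.choose m * k.choose (a-m) *
        ((k+a) + ((k+a) - m)).choose ((k+a) - m))
      = ((k+a).choose k)^2 * ((k+a+k).choose k)^2 := by
  have hsum : ∑ m ∈ range (a+1), a.choose m * k.choose (a-m) *
        ((k+a) + ((k+a) - m)).choose ((k+a) - m)
      = ∑ t ∈ range (a+1), a.choose t * k.choose t * (a+2*k+t).choose (a+k) := by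
    rw [← sum_range_reflect]
    refine sum_congr rfl fun t ht => ?_
    simp only [mem_range] at ht
    have e0 : a + 1 - 1 - t = a - t := by omega
    have e1 : a - (a - t) = t := by omega
    have e2 : (k+a) - (a-t) = k + t := by omega
    have e3 : (k+a) + (k+t) = a+2*k+t := by omega
    rw [e0, e1, e2, e3, Nat.choose_symm (show t ≤ a by omega),
      Nat.choose_symm_of_eq_add (show a+2*k+t = (k+t) + (a+k) by omega)]
  rw [hsum, lemI]
  have h1 : (k+a).choose a = (k+a).choose k := (Nat.choose_symm_add).symm
  have h2 : (a+2*k).choose a = (a+2*k).choose (2*k) := Nat.choose_symm_add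
  have h3 : (a+2*k).choose (2*k) * (2*k).choose k
      = (a+2*k).choose k * (k+a).choose k := by
    have := Nat.choose_mul (n := a+2*k) (show k ≤ 2*k by omega)
    have e1 : a+2*k-k = k+a := by omega
    have e2 : 2*k-k = k := by omega
    rw [e1, e2] at this
    exact this
  have h4 : k+a+k = a+2*k := by omega
  rw [h1, h2, h4]
  calc (2*k).choose k * ((k+a).choose k * ((a+2*k).choose k * (a+2*k).choose (2*k)))
      = (k+a).choose k * (a+2*k).choose k * ((a+2*k).choose (2*k) * (2*k).choose k) := by ring
    _ = (k+a).choose k * (a+2*k).choose k * ((a+2*k).choose k * (k+a).choose k) := by rw [h3]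
    _ = ((k+a).choose k)^2 * ((a+2*k).choose k)^2 := by ring

section helpers
variable {α : Type*} [Fintype α] [DecidableEq α]


variable {α : Type*} [Fintype α] [DecidableEq α]

lemma fin3_eq_two {x : Fin 3} (h0 : x ≠ 0) (h1 : x ≠ 1) : x = 2 := by
  fin_cases x <;> simp_all

lemma countW (A : Finset α) (c : ℕ) :
    ((univ : Finset (α → Fin 3)).filter (fun w =>
        univ.filter (fun i => w i = 0) = A ∧ (univ.filter (fun i => w i = 1)).card = c)).card
      = (Aᶜ.card).choose c := by
  rw [← Finset.card_powersetCard c Aᶜ]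
  apply Finset.card_nbij' (fun w => univ.filter (fun i => w i = 1))
    (fun C => (fun i => if i ∈ A then 0 else if i ∈ C then 1 else 2))
  · intro w hw; simp only [Finset.mem_coe] at *
    simp only [mem_filter, mem_univ, true_and] at hw
    obtain ⟨hA, hc⟩ := hw
    rw [Finset.mem_powersetCard]
    refine ⟨?_, hc⟩
    intro i hi
    simp only [mem_filter, mem_univ, true_and] at hi
    rw [Finset.mem_compl, ← hA]
    simp only [mem_filter, mem_univ, true_and, hi]
    decide
  · intro C hC; simp only [Finset.mem_coe] at *
    rw [Finset.mem_powersetCard] at hC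
    obtain ⟨hsub, hcard⟩ := hC
    simp only [mem_filter, mem_univ, true_and]
    constructor
    · ext i
      simp only [mem_filter, mem_univ, true_and]
      by_cases hiA : i ∈ A
      · simp [hiA]
      · by_cases hiC : i ∈ C
        · simp only [hiA, if_false, hiC, if_true]
          constructor
          · intro h; exact absurd h (by decide)
          · intro h; exact h.elim
        · simp only [hiA, if_false, hiC, if_false]
          constructor
          · intro h; exact absurd h (by decide)
          · intro h; exact h.elim
    · rw [← hcard]
      congr 1
      ext i
      simp only [mem_filter, mem_univ, true_and]
      by_cases hiA : i ∈ A
      · simp only [hiA, if_true]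
        constructor
        · intro h; exact absurd h (by decide)
        · intro h; exact absurd (hsub h) (by simpa using hiA)
      · by_cases hiC : i ∈ C
        · simp [hiA, hiC]
        · simp only [hiA, if_false, hiC, if_false]
          constructor
          · intro h; exact absurd h (by decide)
          · intro h; exact h.elim
  · intro w hw; simp only [Finset.mem_coe] at *
    simp only [mem_filter, mem_univ, true_and] at hw
    obtain ⟨hA, _⟩ := hw
    funext i
    by_cases hiA : i ∈ A
    · simp only [hiA, if_true]
      rw [← hA] at hiA
      simp only [mem_filter, mem_univ, true_and] at hiA
      exact hiA.symm
    · simp only [hiA, if_false]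
      by_cases hi1 : i ∈ univ.filter (fun i => w i = 1)
      · simp only [hi1, if_true]
        simp only [mem_filter, mem_univ, true_and] at hi1
        exact hi1.symm
      · simp only [hi1, if_false]
        simp only [mem_filter, mem_univ, true_and] at hi1
        rw [← hA] at hiA
        simp only [mem_filter, mem_univ, true_and] at hiA
        exact (fin3_eq_two hiA hi1).symm
  · intro C hC; simp only [Finset.mem_coe] at *
    rw [Finset.mem_powersetCard] at hC
    obtain ⟨hsub, _⟩ := hC
    ext i
    simp only [mem_filter, mem_univ, true_and]
    by_cases hiA : i ∈ A
    · simp only [hiA, if_true]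
      constructor
      · intro h; exact absurd h (by decide)
      · intro h; exact absurd (hsub h) (by simpa using hiA)
    · by_cases hiC : i ∈ C
      · simp [hiA, hiC]
      · simp only [hiA, if_false, hiC, if_false]
        constructor
        · intro h; exact absurd h (by decide)
        · intro h; exact h.elim

lemma countB (A : Finset α) (r m : ℕ) (hm : m ≤ r) :
    ((Finset.powersetCard r (univ : Finset α)).filter (fun B => (A ∩ B).card = m)).card
      = A.card.choose m * Aᶜ.card.choose (r - m) := by
  rw [← Finset.card_powersetCard m A, ← Finset.card_powersetCard (r-m) Aᶜ, ← Finset.card_product]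
  apply Finset.card_nbij' (fun B => (A ∩ B, B \ A)) (fun q => q.1 ∪ q.2)
  · intro B hB; simp only [Finset.mem_coe] at *
    simp only [mem_filter, Finset.mem_powersetCard] at hB
    obtain ⟨⟨_, hBr⟩, hABm⟩ := hB
    simp only [Finset.mem_product, Finset.mem_powersetCard]
    refine ⟨⟨inter_subset_left, hABm⟩, ?_, ?_⟩
    · intro i hi
      simp only [mem_sdiff] at hi
      simp [hi.2]
    · have h := Finset.card_sdiff_add_card_inter B A
      rw [hBr, Finset.inter_comm B A, hABm] at h
      omega
  · intro q hq; simp only [Finset.mem_coe] at *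
    simp only [Finset.mem_product, Finset.mem_powersetCard] at hq
    obtain ⟨⟨hXA, hXm⟩, hYA, hYm⟩ := hq
    have hdisj : Disjoint q.1 q.2 := by
      refine Finset.disjoint_left.2 fun i hiX hiY => ?_
      exact absurd (hXA hiX) (by simpa using hYA hiY)
    simp only [mem_filter, Finset.mem_powersetCard]
    have hAX : A ∩ q.1 = q.1 := Finset.inter_eq_right.2 hXA
    have hAY : A ∩ q.2 = ∅ := by
      refine Finset.eq_empty_of_forall_notMem fun i hi => ?_
      simp only [mem_inter] at hi
      exact absurd hi.1 (by simpa using hYA hi.2)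
    refine ⟨⟨fun i _ => mem_univ i, ?_⟩, ?_⟩
    · rw [Finset.card_union_of_disjoint hdisj, hXm, hYm]; omega
    · rw [Finset.inter_union_distrib_left, hAX, hAY, Finset.union_empty, hXm]
  · intro B hB; simp only [Finset.mem_coe] at *
    rw [Finset.inter_comm, Finset.union_comm]
    exact Finset.sdiff_union_inter B A
  · intro q hq; simp only [Finset.mem_coe] at *
    simp only [Finset.mem_product, Finset.mem_powersetCard] at hq
    obtain ⟨⟨hXA, _⟩, hYA, _⟩ := hq
    have hAX : A ∩ q.1 = q.1 := Finset.inter_eq_right.2 hXA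
    have hAY : A ∩ q.2 = ∅ := by
      refine Finset.eq_empty_of_forall_notMem fun i hi => ?_
      simp only [mem_inter] at hi
      exact absurd hi.1 (by simpa using hYA hi.2)
    have h1 : A ∩ (q.1 ∪ q.2) = q.1 := by
      rw [Finset.inter_union_distrib_left, hAX, hAY, Finset.union_empty]
    have h2 : (q.1 ∪ q.2) \ A = q.2 := by
      rw [Finset.union_sdiff_distrib]
      have hX : q.1 \ A = ∅ := Finset.sdiff_eq_empty_iff_subset.2 hXA
      have hY : q.2 \ A = q.2 := by
        refine Finset.sdiff_eq_self_of_disjoint ?_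
        refine Finset.disjoint_left.2 fun i hiY hiA => ?_
        exact absurd hiA (by simpa using hYA hiY)
      rw [hX, hY, Finset.empty_union]
    rw [h1, h2]


lemma card3 (w : α → Fin 3) :
    (univ.filter (fun i => w i = 0)).card + (univ.filter (fun i => w i = 1)).card
      + (univ.filter (fun i => w i = 2)).card = Fintype.card α := by
  have h := Finset.card_eq_sum_card_fiberwise
    (f := w) (s := (univ : Finset α)) (t := univ) (fun x _ => mem_univ _)
  rw [Fin.sum_univ_three] at h
  rw [← Finset.card_univ]
  omega

lemma cardne (w : α → Fin 3) :
    (univ.filter (fun i => w i ≠ 0)).card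
      = Fintype.card α - (univ.filter (fun i => w i = 0)).card := by
  have h := Finset.card_filter_add_card_filter_not
    (s := (univ : Finset α)) (p := fun i => w i = 0)
  rw [Finset.card_univ] at h
  have e : (univ.filter (fun i => w i ≠ 0)) = (univ.filter (fun i => ¬ w i = 0)) := by
    simp [ne_eq]
  rw [e]
  omega

lemma sum_sq_choose (k : ℕ) :
    ∑ c ∈ range (k+1), k.choose c * k.choose c = (2*k).choose k := by
  have h := Nat.add_choose_eq k k k
  rw [Finset.Nat.sum_antidiagonal_eq_sum_range_succ_mk] at h
  rw [two_mul, h]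
  refine sum_congr rfl fun c hc => ?_
  simp only [mem_range] at hc
  rw [Nat.choose_symm (show c ≤ k by omega)]

end helpers

theorem weighted_abelian_squares_apery (n k : ℕ) (hk : k ≤ n) :
    ∑ p ∈ (Finset.univ : Finset ((Fin n → Fin 3) × (Fin n → Fin 3))).filter (fun p =>
        (∀ c : Fin 3,
          (Finset.univ.filter (fun i => p.1 i = c)).card
            = (Finset.univ.filter (fun i => p.2 i = c)).card) ∧
        (Finset.univ.filter (fun i => p.1 i ≠ 0)).card = k),
        (n + (n - (Finset.univ.filter (fun i => p.1 i = 0 ∧ p.2 i = 0)).card)).choose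
          (n - (Finset.univ.filter (fun i => p.1 i = 0 ∧ p.2 i = 0)).card)
      = (n.choose k) ^ 2 * ((n + k).choose k) ^ 2 := by
  classical
  obtain ⟨a, rfl⟩ : ∃ a, n = k + a := ⟨n - k, by omega⟩
  -- Step 1 : replace the filter by the card-characterization
  have key1 : ((Finset.univ : Finset ((Fin (k+a) → Fin 3) × (Fin (k+a) → Fin 3))).filter (fun p =>
        (∀ c : Fin 3,
          (Finset.univ.filter (fun i => p.1 i = c)).card
            = (Finset.univ.filter (fun i => p.2 i = c)).card) ∧
        (Finset.univ.filter (fun i => p.1 i ≠ 0)).card = k))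
      = (Finset.univ.filter (fun p =>
          (univ.filter (fun i => p.1 i = 0)).card = a ∧
          (univ.filter (fun i => p.2 i = 0)).card = a ∧
          (univ.filter (fun i => p.1 i = 1)).card = (univ.filter (fun i => p.2 i = 1)).card)) := by
    ext p
    simp only [mem_filter, mem_univ, true_and]
    constructor
    · rintro ⟨hc, hne⟩
      have h0 := hc 0
      have h1 := hc 1
      have hne2 := cardne p.1
      rw [Fintype.card_fin] at hne2
      have hle : (univ.filter (fun i => p.1 i = 0)).card ≤ k + a :=
        le_trans (card_filter_le _ _) (by simp)
      have hz1 : (univ.filter (fun i => p.1 i = 0)).card = a := by omega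
      exact ⟨hz1, by omega, h1⟩
    · rintro ⟨hz1, hz2, ho⟩
      have h31 := card3 p.1
      have h32 := card3 p.2
      rw [Fintype.card_fin] at h31 h32
      have hne2 := cardne p.1
      rw [Fintype.card_fin] at hne2
      constructor
      · intro c
        fin_cases c
        · simpa using hz1.trans hz2.symm
        · simpa using ho
        · show (univ.filter (fun i => p.1 i = 2)).card = (univ.filter (fun i => p.2 i = 2)).card
          omega
      · omega
  rw [key1]
  -- Step 2 : fiber over the pair of zero-sets
  have hmaps : ∀ p ∈ (Finset.univ.filter (fun p :
        (Fin (k+a) → Fin 3) × (Fin (k+a) → Fin 3) =>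
          (univ.filter (fun i => p.1 i = 0)).card = a ∧
          (univ.filter (fun i => p.2 i = 0)).card = a ∧
          (univ.filter (fun i => p.1 i = 1)).card = (univ.filter (fun i => p.2 i = 1)).card)),
      (univ.filter (fun i => p.1 i = 0), univ.filter (fun i => p.2 i = 0))
        ∈ (powersetCard a (univ : Finset (Fin (k+a)))) ×ˢ (powersetCard a univ) := by
    intro p hp
    simp only [mem_filter, mem_univ, true_and] at hp
    simp only [Finset.mem_product, Finset.mem_powersetCard]
    exact ⟨⟨fun i _ => mem_univ i, hp.1⟩, fun i _ => mem_univ i, hp.2.1⟩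
  rw [← Finset.sum_fiberwise_of_maps_to hmaps (fun p =>
      ((k+a) + ((k+a) - (Finset.univ.filter (fun i => p.1 i = 0 ∧ p.2 i = 0)).card)).choose
        ((k+a) - (Finset.univ.filter (fun i => p.1 i = 0 ∧ p.2 i = 0)).card))]
  -- Step 3 : evaluate the inner sums
  have inner : ∀ q ∈ (powersetCard a (univ : Finset (Fin (k+a)))) ×ˢ (powersetCard a univ),
      (∑ p ∈ (Finset.univ.filter (fun p :
          (Fin (k+a) → Fin 3) × (Fin (k+a) → Fin 3) =>
          (univ.filter (fun i => p.1 i = 0)).card = a ∧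
          (univ.filter (fun i => p.2 i = 0)).card = a ∧
          (univ.filter (fun i => p.1 i = 1)).card = (univ.filter (fun i => p.2 i = 1)).card)).filter
          (fun p => (univ.filter (fun i => p.1 i = 0), univ.filter (fun i => p.2 i = 0)) = q),
        ((k+a) + ((k+a) - (Finset.univ.filter (fun i => p.1 i = 0 ∧ p.2 i = 0)).card)).choose
          ((k+a) - (Finset.univ.filter (fun i => p.1 i = 0 ∧ p.2 i = 0)).card))
      = (2*k).choose k *
        ((k+a) + ((k+a) - (q.1 ∩ q.2).card)).choose ((k+a) - (q.1 ∩ q.2).card) := by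
    intro q hq
    simp only [Finset.mem_product, Finset.mem_powersetCard] at hq
    obtain ⟨⟨-, hq1⟩, -, hq2⟩ := hq
    have hconst : ∀ p ∈ (Finset.univ.filter (fun p :
          (Fin (k+a) → Fin 3) × (Fin (k+a) → Fin 3) =>
          (univ.filter (fun i => p.1 i = 0)).card = a ∧
          (univ.filter (fun i => p.2 i = 0)).card = a ∧
          (univ.filter (fun i => p.1 i = 1)).card = (univ.filter (fun i => p.2 i = 1)).card)).filter
          (fun p => (univ.filter (fun i => p.1 i = 0), univ.filter (fun i => p.2 i = 0)) = q),
        ((k+a) + ((k+a) - (Finset.univ.filter (fun i => p.1 i = 0 ∧ p.2 i = 0)).card)).choose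
          ((k+a) - (Finset.univ.filter (fun i => p.1 i = 0 ∧ p.2 i = 0)).card)
        = ((k+a) + ((k+a) - (q.1 ∩ q.2).card)).choose ((k+a) - (q.1 ∩ q.2).card) := by
      intro p hp
      simp only [mem_filter] at hp
      obtain ⟨-, hpq⟩ := hp
      rw [← hpq, Finset.filter_and]
    rw [Finset.sum_congr rfl hconst, Finset.sum_const, smul_eq_mul]
    congr 1
    -- card of the fiber = (2k).choose k
    have hfib : ((Finset.univ.filter (fun p :
          (Fin (k+a) → Fin 3) × (Fin (k+a) → Fin 3) =>
          (univ.filter (fun i => p.1 i = 0)).card = a ∧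
          (univ.filter (fun i => p.2 i = 0)).card = a ∧
          (univ.filter (fun i => p.1 i = 1)).card = (univ.filter (fun i => p.2 i = 1)).card)).filter
          (fun p => (univ.filter (fun i => p.1 i = 0), univ.filter (fun i => p.2 i = 0)) = q))
        = (Finset.univ.filter (fun p :
          (Fin (k+a) → Fin 3) × (Fin (k+a) → Fin 3) =>
          (univ.filter (fun i => p.1 i = 0) = q.1 ∧
           univ.filter (fun i => p.2 i = 0) = q.2) ∧
          (univ.filter (fun i => p.1 i = 1)).card = (univ.filter (fun i => p.2 i = 1)).card)) := by
      ext p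
      simp only [mem_filter, mem_univ, true_and, Prod.ext_iff]
      constructor
      · rintro ⟨⟨-, -, ho⟩, h1, h2⟩
        exact ⟨⟨h1, h2⟩, ho⟩
      · rintro ⟨⟨h1, h2⟩, ho⟩
        exact ⟨⟨h1 ▸ hq1, h2 ▸ hq2, ho⟩, h1, h2⟩
    rw [hfib]
    -- fiber over the number of ones of the first word
    have hmaps2 : ∀ p ∈ (Finset.univ.filter (fun p :
          (Fin (k+a) → Fin 3) × (Fin (k+a) → Fin 3) =>
          (univ.filter (fun i => p.1 i = 0) = q.1 ∧
           univ.filter (fun i => p.2 i = 0) = q.2) ∧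
          (univ.filter (fun i => p.1 i = 1)).card = (univ.filter (fun i => p.2 i = 1)).card)),
        (univ.filter (fun i => p.1 i = 1)).card ∈ range (k+1) := by
      intro p hp
      simp only [mem_filter, mem_univ, true_and] at hp
      obtain ⟨⟨h1, -⟩, -⟩ := hp
      have hsub : univ.filter (fun i => p.1 i = 1) ⊆ (q.1)ᶜ := by
        intro i hi
        simp only [mem_filter, mem_univ, true_and] at hi
        rw [Finset.mem_compl, ← h1]
        simp only [mem_filter, mem_univ, true_and, hi]
        decide
      have hle := Finset.card_le_card hsub
      rw [Finset.card_compl, Fintype.card_fin, hq1] at hle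
      simp only [mem_range]
      omega
    rw [Finset.card_eq_sum_card_fiberwise hmaps2]
    have hfc : ∀ c ∈ range (k+1),
        (((Finset.univ.filter (fun p :
          (Fin (k+a) → Fin 3) × (Fin (k+a) → Fin 3) =>
          (univ.filter (fun i => p.1 i = 0) = q.1 ∧
           univ.filter (fun i => p.2 i = 0) = q.2) ∧
          (univ.filter (fun i => p.1 i = 1)).card = (univ.filter (fun i => p.2 i = 1)).card)).filter
          (fun p => (univ.filter (fun i => p.1 i = 1)).card = c)).card)
        = k.choose c * k.choose c := by
      intro c _
      have hsplit : ((Finset.univ.filter (fun p :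
          (Fin (k+a) → Fin 3) × (Fin (k+a) → Fin 3) =>
          (univ.filter (fun i => p.1 i = 0) = q.1 ∧
           univ.filter (fun i => p.2 i = 0) = q.2) ∧
          (univ.filter (fun i => p.1 i = 1)).card = (univ.filter (fun i => p.2 i = 1)).card)).filter
          (fun p => (univ.filter (fun i => p.1 i = 1)).card = c))
          = ((univ : Finset (Fin (k+a) → Fin 3)).filter (fun w =>
              univ.filter (fun i => w i = 0) = q.1 ∧ (univ.filter (fun i => w i = 1)).card = c))
            ×ˢ ((univ : Finset (Fin (k+a) → Fin 3)).filter (fun w =>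
              univ.filter (fun i => w i = 0) = q.2 ∧ (univ.filter (fun i => w i = 1)).card = c)) := by
        ext p
        simp only [mem_filter, mem_univ, true_and, Finset.mem_product]
        constructor
        · rintro ⟨⟨⟨h1, h2⟩, ho⟩, hc⟩
          exact ⟨⟨h1, hc⟩, h2, by omega⟩
        · rintro ⟨⟨h1, hc1⟩, h2, hc2⟩
          exact ⟨⟨⟨h1, h2⟩, by omega⟩, hc1⟩
      rw [hsplit, Finset.card_product, countW, countW]
      have e1 : (q.1)ᶜ.card = k := by
        rw [Finset.card_compl, Fintype.card_fin, hq1]; omega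
      have e2 : (q.2)ᶜ.card = k := by
        rw [Finset.card_compl, Fintype.card_fin, hq2]; omega
      rw [e1, e2]
    rw [Finset.sum_congr rfl hfc, sum_sq_choose]
  rw [Finset.sum_congr rfl inner, ← Finset.mul_sum, Finset.sum_product]
  -- Step 4 : evaluate the inner sums over B
  have step2 : ∀ A ∈ (powersetCard a (univ : Finset (Fin (k+a)))),
      (∑ B ∈ (powersetCard a (univ : Finset (Fin (k+a)))),
        ((k+a) + ((k+a) - (A ∩ B).card)).choose ((k+a) - (A ∩ B).card))
      = ∑ m ∈ range (a+1), a.choose m * k.choose (a-m) *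
          ((k+a) + ((k+a) - m)).choose ((k+a) - m) := by
    intro A hA
    rw [Finset.mem_powersetCard] at hA
    obtain ⟨-, hAcard⟩ := hA
    have hAc : Aᶜ.card = k := by
      rw [Finset.card_compl, Fintype.card_fin, hAcard]; omega
    have hmapsB : ∀ B ∈ (powersetCard a (univ : Finset (Fin (k+a)))),
        (A ∩ B).card ∈ range (a+1) := by
      intro B hB
      rw [Finset.mem_powersetCard] at hB
      have := Finset.card_le_card (Finset.inter_subset_right (s₁ := A) (s₂ := B))
      simp only [mem_range]
      omega
    rw [← Finset.sum_fiberwise_of_maps_to hmapsB (fun B =>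
        ((k+a) + ((k+a) - (A ∩ B).card)).choose ((k+a) - (A ∩ B).card))]
    refine sum_congr rfl fun m hm => ?_
    simp only [mem_range] at hm
    have hconst : ∀ B ∈ (powersetCard a (univ : Finset (Fin (k+a)))).filter
        (fun B => (A ∩ B).card = m),
        ((k+a) + ((k+a) - (A ∩ B).card)).choose ((k+a) - (A ∩ B).card)
          = ((k+a) + ((k+a) - m)).choose ((k+a) - m) := by
      intro B hB
      simp only [mem_filter] at hB
      rw [hB.2]
    rw [Finset.sum_congr rfl hconst, Finset.sum_const, smul_eq_mul,
      countB A a m (by omega), hAcard, hAc]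
  rw [Finset.sum_congr rfl step2, Finset.sum_const, smul_eq_mul,
    Finset.card_powersetCard, Finset.card_univ, Fintype.card_fin]
  exact lemII a k
end
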